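/- For any 0 < c < 1 and r ≥ 0, f((1+c)r) ≥ (1 + (c/2)·exp(-α R²)) · f(r), where f(r) = ∫₀^r ψ(s)g(s) ds. -/
import Mathlib


open Real MeasureTheory intervalIntegral

/-- The auxiliary function ψ(r) = exp(-α·min{r², R²}). -/
noncomputable def psiE (α R r : ℝ) : ℝ := Real.exp (-(α * min (r ^ 2) (R ^ 2)))

/-- Ψ(r) = ∫₀ʳ ψ(s) ds. -/
noncomputable def PsiE (α R r : ℝ) : ℝ := ∫ s in (0:ℝ)..r, psiE α R s

/-- g(r) = 1 - (1/2)·(∫₀^{min{r,R}} Ψ/ψ)/(∫₀^R Ψ/ψ). -/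
noncomputable def gEb (α R r : ℝ) : ℝ :=
  1 - (1 / 2) * (∫ s in (0:ℝ)..(min r R), PsiE α R s / psiE α R s) /
      (∫ s in (0:ℝ)..R, PsiE α R s / psiE α R s)

/-- The Eberle distance function f(r) = ∫₀ʳ ψ(s)·g(s) ds. -/
noncomputable def fEb (α R r : ℝ) : ℝ := ∫ s in (0:ℝ)..r, psiE α R s * gEb α R s

section Aux

variable {α R : ℝ}

lemma psiE_cont : Continuous (psiE α R) := by
  unfold psiE
  exact (Real.continuous_exp.comp
    ((continuous_const.mul ((continuous_pow 2).min continuous_const)).neg))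

lemma psiE_pos (r : ℝ) : 0 < psiE α R r := Real.exp_pos _

lemma psiE_le_one (hα : 0 ≤ α) (r : ℝ) : psiE α R r ≤ 1 := by
  unfold psiE
  rw [show (1:ℝ) = Real.exp 0 by simp]
  apply Real.exp_le_exp.mpr
  have : 0 ≤ min (r ^ 2) (R ^ 2) := le_min (sq_nonneg r) (sq_nonneg R)
  nlinarith [mul_nonneg hα this]

lemma le_psiE (hα : 0 ≤ α) (r : ℝ) : Real.exp (-(α * R ^ 2)) ≤ psiE α R r := by
  unfold psiE
  apply Real.exp_le_exp.mpr
  have : min (r ^ 2) (R ^ 2) ≤ R ^ 2 := min_le_right _ _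
  nlinarith [mul_le_mul_of_nonneg_left this hα]

lemma PsiE_cont : Continuous (PsiE α R) :=
  intervalIntegral.continuous_primitive
    (fun _ _ => psiE_cont.intervalIntegrable _ _) 0

lemma PsiE_nonneg (r : ℝ) (hr : 0 ≤ r) : 0 ≤ PsiE α R r := by
  unfold PsiE
  apply intervalIntegral.integral_nonneg hr
  intro x _
  exact (psiE_pos x).le

lemma PsiE_pos (r : ℝ) (hr : 0 < r) : 0 < PsiE α R r := by
  unfold PsiE
  exact intervalIntegral.intervalIntegral_pos_of_pos
    (psiE_cont.intervalIntegrable _ _) (fun x => psiE_pos x) hr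

lemma q_cont : Continuous (fun s => PsiE α R s / psiE α R s) :=
  PsiE_cont.div psiE_cont (fun s => (psiE_pos s).ne')

lemma q_nonneg {s : ℝ} (hs : 0 ≤ s) : 0 ≤ PsiE α R s / psiE α R s :=
  div_nonneg (PsiE_nonneg s hs) (psiE_pos s).le

/-- the denominator -/
lemma denom_pos (hR : 0 < R) :
    0 < ∫ s in (0:ℝ)..R, PsiE α R s / psiE α R s := by
  apply intervalIntegral.intervalIntegral_pos_of_pos_on
    (q_cont.intervalIntegrable _ _) _ hR
  intro x hx
  exact div_pos (PsiE_pos x hx.1) (psiE_pos x)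

lemma gEb_le_one (hR : 0 < R) {r : ℝ} (hr : 0 ≤ r) : gEb α R r ≤ 1 := by
  unfold gEb
  have hD := denom_pos (α := α) hR
  have hnum : 0 ≤ ∫ s in (0:ℝ)..(min r R), PsiE α R s / psiE α R s := by
    apply intervalIntegral.integral_nonneg (le_min hr hR.le)
    intro x hx
    exact q_nonneg hx.1
  have : 0 ≤ (1 / 2) * (∫ s in (0:ℝ)..(min r R), PsiE α R s / psiE α R s) / _ :=
    div_nonneg (by linarith) hD.le
  linarith

lemma half_le_gEb (hR : 0 < R) {r : ℝ} (hr : 0 ≤ r) : 1 / 2 ≤ gEb α R r := by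
  unfold gEb
  have hD := denom_pos (α := α) hR
  have hmono : (∫ s in (0:ℝ)..(min r R), PsiE α R s / psiE α R s)
      ≤ ∫ s in (0:ℝ)..R, PsiE α R s / psiE α R s := by
    apply intervalIntegral.integral_mono_interval (le_refl (0:ℝ))
      (le_min hr hR.le) (min_le_right r R)
    · filter_upwards [ae_restrict_mem measurableSet_Ioc] with x hx
      exact q_nonneg hx.1.le
    · exact q_cont.intervalIntegrable _ _
  have h1 : (1 / 2) * (∫ s in (0:ℝ)..(min r R), PsiE α R s / psiE α R s) /
      (∫ s in (0:ℝ)..R, PsiE α R s / psiE α R s) ≤ 1 / 2 := by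
    rw [div_le_iff₀ hD]
    nlinarith
  linarith

lemma gEb_cont (hR : 0 < R) : Continuous (gEb α R) := by
  unfold gEb
  have hD := (denom_pos (α := α) hR).ne'
  apply continuous_const.sub
  apply Continuous.div_const
  apply continuous_const.mul
  exact (intervalIntegral.continuous_primitive
    (fun _ _ => q_cont.intervalIntegrable _ _) 0).comp
      (continuous_id.min continuous_const)

lemma integrand_cont (hR : 0 < R) : Continuous (fun s => psiE α R s * gEb α R s) :=
  psiE_cont.mul (gEb_cont hR)

lemma integrand_lb (hα : 0 ≤ α) (hR : 0 < R) {s : ℝ} (hs : 0 ≤ s) :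
    Real.exp (-(α * R ^ 2)) / 2 ≤ psiE α R s * gEb α R s := by
  have h1 := le_psiE (R := R) hα s
  have h2 := half_le_gEb (α := α) hR hs
  have h3 := psiE_pos (α := α) (R := R) s
  nlinarith [Real.exp_pos (-(α * R ^ 2))]

lemma integrand_ub (hα : 0 ≤ α) (hR : 0 < R) {s : ℝ} (hs : 0 ≤ s) :
    psiE α R s * gEb α R s ≤ 1 := by
  have h1 := psiE_le_one (R := R) hα s
  have h2 := gEb_le_one (α := α) hR hs
  have h3 := psiE_pos (α := α) (R := R) s
  have h4 := half_le_gEb (α := α) hR hs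
  nlinarith

lemma fEb_segment_lb (hα : 0 ≤ α) (hR : 0 < R) {a b : ℝ} (ha : 0 ≤ a) (hab : a ≤ b) :
    Real.exp (-(α * R ^ 2)) / 2 * (b - a) ≤ ∫ s in a..b, psiE α R s * gEb α R s := by
  have := intervalIntegral.integral_mono_on hab
    (_root_.intervalIntegrable_const (μ := volume) (c := Real.exp (-(α * R ^ 2)) / 2))
    ((integrand_cont hR).intervalIntegrable a b)
    (fun x hx => integrand_lb hα hR (ha.trans hx.1))
  rw [intervalIntegral.integral_const, smul_eq_mul] at this
  linarith

lemma fEb_le_self (hα : 0 ≤ α) (hR : 0 < R) {r : ℝ} (hr : 0 ≤ r) : fEb α R r ≤ r := by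
  unfold fEb
  have := intervalIntegral.integral_mono_on hr
    ((integrand_cont hR).intervalIntegrable 0 r)
    (_root_.intervalIntegrable_const (μ := volume) (c := (1:ℝ)))
    (fun x hx => integrand_ub hα hR hx.1)
  simpa using this

end Aux

/-- f((1+c)r) ≥ (1 + (c/2)·exp(-αR²))·f(r) for 0 < c < 1, r ≥ 0. -/
theorem f_dilation_lower_bound (α R : ℝ) (hα : 0 < α) (hR : 0 < R) :
    ∀ c : ℝ, 0 < c → c < 1 → ∀ r : ℝ, 0 ≤ r →
      (1 + (c / 2) * Real.exp (-(α * R ^ 2))) * fEb α R r ≤ fEb α R ((1 + c) * r) := by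
  intro c hc hc1 r hr
  have hsplit : fEb α R ((1 + c) * r) =
      fEb α R r + ∫ s in r..((1 + c) * r), psiE α R s * gEb α R s := by
    unfold fEb
    rw [intervalIntegral.integral_add_adjacent_intervals
      ((integrand_cont hR).intervalIntegrable 0 r)
      ((integrand_cont hR).intervalIntegrable r ((1 + c) * r))]
  have hrle : r ≤ (1 + c) * r := by nlinarith
  have hseg := fEb_segment_lb hα.le hR hr hrle
  have hfle := fEb_le_self hα.le hR hr
  have hE := Real.exp_pos (-(α * R ^ 2))
  rw [hsplit]
  nlinarith [hseg, hfle, hE, mul_nonneg (mul_nonneg hc.le hE.le) (sub_nonneg.mpr hfle)]
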